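/- Let k ≥ 2 and let G be a finite abelian group containing elements a, b and an element t with t ≠ 0 and 2·t = 0, such that every g ∈ G can be written as g = α·a + β·b + γ·t with α, β ∈ ℤ, γ ∈ ℕ, and |α| + |β| + γ ≤ k. Then |G| ≤ 4k². -/

import Mathlib

open Finset

noncomputable def Dm (r : ℕ) : Finset (ℤ × ℤ) :=
  ((Finset.Icc (-(r:ℤ)) r) ×ˢ (Finset.Icc (-(r:ℤ)) r)).filter
    (fun p => p.1.natAbs + p.2.natAbs ≤ r)

lemma mem_Dm {r : ℕ} {p : ℤ × ℤ} : p ∈ Dm r ↔ p.1.natAbs + p.2.natAbs ≤ r := by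
  simp only [Dm, Finset.mem_filter, Finset.mem_product, Finset.mem_Icc]
  constructor
  · exact fun h => h.2
  · intro h
    refine ⟨⟨⟨?_, ?_⟩, ?_, ?_⟩, h⟩ <;> omega

lemma card_Dm (r : ℕ) : (Dm r).card = 2 * r ^ 2 + 2 * r + 1 := by
  have h1 : ((Dm r).filter (fun p => (p.1 + p.2 + (r:ℤ)) % 2 = 0)).card = (r + 1) ^ 2 := by
    rw [show (r+1)^2 = ((Finset.Icc (0:ℤ) r) ×ˢ (Finset.Icc (0:ℤ) r)).card by
      rw [Finset.card_product, Int.card_Icc]; simp; ring]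
    apply Finset.card_bij' (fun p _ => (((p.1 + p.2 + r)/2 : ℤ), ((p.1 - p.2 + r)/2 : ℤ)))
      (fun q _ => ((q.1 + q.2 - r : ℤ), (q.1 - q.2 : ℤ)))
    · intro p hp
      have hp1 := mem_Dm.mp (Finset.mem_filter.mp hp).1
      have hp2 := (Finset.mem_filter.mp hp).2
      simp only [Finset.mem_product, Finset.mem_Icc]
      omega
    · intro q hq
      simp only [Finset.mem_product, Finset.mem_Icc] at hq
      simp only [Finset.mem_filter]
      constructor
      · rw [mem_Dm]; omega
      · omega
    · intro p hp
      simp only [Finset.mem_filter] at hp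
      have hp2 := hp.2
      ext <;> simp <;> omega
    · intro q hq
      simp only [Finset.mem_product, Finset.mem_Icc] at hq
      ext <;> simp <;> omega
  have h2 : ((Dm r).filter (fun p => ¬((p.1 + p.2 + (r:ℤ)) % 2 = 0))).card = r ^ 2 := by
    rw [show r^2 = ((Finset.Icc (1:ℤ) r) ×ˢ (Finset.Icc (1:ℤ) r)).card by
      rw [Finset.card_product, Int.card_Icc]; simp; ring]
    apply Finset.card_bij' (fun p _ => (((p.1 + p.2 + r + 1)/2 : ℤ), ((p.1 - p.2 + r + 1)/2 : ℤ)))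
      (fun q _ => ((q.1 + q.2 - r - 1 : ℤ), (q.1 - q.2 : ℤ)))
    · intro p hp
      have hp1 := mem_Dm.mp (Finset.mem_filter.mp hp).1
      have hp2 := (Finset.mem_filter.mp hp).2
      simp only [Finset.mem_product, Finset.mem_Icc]
      omega
    · intro q hq
      simp only [Finset.mem_product, Finset.mem_Icc] at hq
      simp only [Finset.mem_filter]
      constructor
      · rw [mem_Dm]; omega
      · omega
    · intro p hp
      simp only [Finset.mem_filter] at hp
      have hp2 := hp.2
      ext <;> simp <;> omega
    · intro q hq
      simp only [Finset.mem_product, Finset.mem_Icc] at hq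
      ext <;> simp <;> omega
  have h3 := Finset.card_filter_add_card_filter_not
    (s := Dm r) (p := fun p => (p.1 + p.2 + (r:ℤ)) % 2 = 0)
  rw [h1, h2] at h3
  have : (r+1)^2 = r^2 + 2*r + 1 := by ring
  omega


lemma split_lemma (r₁ r₂ : ℕ) (z₁ z₂ : ℤ) (h : z₁.natAbs + z₂.natAbs ≤ r₁ + r₂) :
    ∃ x y : ℤ, x.natAbs + y.natAbs ≤ r₁ ∧ (x + z₁).natAbs + (y + z₂).natAbs ≤ r₂ := by
  set d : ℤ := max 0 ((z₁.natAbs : ℤ) + (z₂.natAbs : ℤ) - r₂) with hd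
  set m : ℤ := min d (z₁.natAbs : ℤ) with hm
  rcases le_or_gt 0 z₁ with h1 | h1 <;> rcases le_or_gt 0 z₂ with h2 | h2
  · exact ⟨-m, -(d - m), by omega, by omega⟩
  · exact ⟨-m, (d - m), by omega, by omega⟩
  · exact ⟨m, -(d - m), by omega, by omega⟩
  · exact ⟨m, (d - m), by omega, by omega⟩

lemma round_div (P D : ℤ) (hD : D ≠ 0) : ∃ m : ℤ, 2 * (P - m * D).natAbs ≤ D.natAbs := by
  -- reduce to the case D > 0
  rcases lt_or_gt_of_ne hD with hneg | hpos
  · obtain ⟨m, hm⟩ : ∃ m : ℤ, 2 * (P - m * (-D)).natAbs ≤ (-D).natAbs := by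
      have hD' : 0 < -D := by omega
      set q := P / (-D) with hq
      have h0 : P % (-D) = P - (-D) * q := Int.emod_def P (-D)
      have h1 : 0 ≤ P % (-D) := Int.emod_nonneg P (by omega)
      have h2 : P % (-D) < -D := Int.emod_lt_of_pos P hD'
      rcases le_or_gt (2 * (P % (-D))) (-D) with hc | hc
      · refine ⟨q, ?_⟩
        have : P - q * (-D) = P % (-D) := by rw [h0]; ring
        rw [this]; omega
      · refine ⟨q + 1, ?_⟩
        have : P - (q + 1) * (-D) = P % (-D) + D := by rw [h0]; ring
        rw [this]; omega
    exact ⟨-m, by rw [show P - -m * D = P - m * (-D) by ring]; rw [Int.natAbs_neg] at hm; exact hm⟩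
  · set q := P / D with hq
    have h0 : P % D = P - D * q := Int.emod_def P D
    have h1 : 0 ≤ P % D := Int.emod_nonneg P (by omega)
    have h2 : P % D < D := Int.emod_lt_of_pos P hpos
    rcases le_or_gt (2 * (P % D)) D with hc | hc
    · refine ⟨q, ?_⟩
      have : P - q * D = P % D := by rw [h0]; ring
      rw [this]; omega
    · refine ⟨q + 1, ?_⟩
      have : P - (q + 1) * D = P % D - D := by rw [h0]; ring
      rw [this]; omega


-- |W₂|,|X₁|,|X₂| ≤ 2K;  W₁ = 2K;  max(|X₁|,|X₂|) = 2K;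
-- max(|W₁+X₁|,|W₂+X₂|) ≥ 2K+2;  max(|W₁-X₁|,|W₂-X₂|) ≥ 2K+2
-- ⊢ |W₂X₁ - W₁X₂| ≥ 4K²+4
lemma det_aux (K W₂ X₁ X₂ : ℤ) (hK : 2 ≤ K)
    (hW2 : -(2*K) ≤ W₂ ∧ W₂ ≤ 2*K) (hX1 : -(2*K) ≤ X₁ ∧ X₁ ≤ 2*K)
    (hX2 : -(2*K) ≤ X₂ ∧ X₂ ≤ 2*K)
    (hXm : X₁ = 2*K ∨ X₁ = -(2*K) ∨ X₂ = 2*K ∨ X₂ = -(2*K))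
    (hS : (2*K+2 ≤ 2*K+X₁ ∨ 2*K+X₁ ≤ -(2*K+2)) ∨ (2*K+2 ≤ W₂+X₂ ∨ W₂+X₂ ≤ -(2*K+2)))
    (hD : (2*K+2 ≤ 2*K-X₁ ∨ 2*K-X₁ ≤ -(2*K+2)) ∨ (2*K+2 ≤ W₂-X₂ ∨ W₂-X₂ ≤ -(2*K+2))) :
    4*K^2+4 ≤ W₂*X₁ - 2*K*X₂ ∨ W₂*X₁ - 2*K*X₂ ≤ -(4*K^2+4) := by
  have h2K : (0:ℤ) ≤ 2*K := by omega
  rcases eq_or_ne X₁ (2*K) with hv | hne1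
  · -- X₁ = 2K; then |W₂ - X₂| ≥ 2K+2
    have hDv : 2*K+2 ≤ W₂-X₂ ∨ W₂-X₂ ≤ -(2*K+2) := by omega
    subst hv
    rcases hDv with h | h
    · left; nlinarith [mul_le_mul_of_nonneg_left h h2K]
    · right; nlinarith [mul_le_mul_of_nonneg_left h h2K]
  rcases eq_or_ne X₁ (-(2*K)) with hv | hne2
  · -- X₁ = -2K; then |W₂ + X₂| ≥ 2K+2
    have hSv : 2*K+2 ≤ W₂+X₂ ∨ W₂+X₂ ≤ -(2*K+2) := by omega
    subst hv
    rcases hSv with h | h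
    · right; nlinarith [mul_le_mul_of_nonneg_left h h2K]
    · left; nlinarith [mul_le_mul_of_nonneg_left h h2K]
  -- |X₁| < 2K, X₂ = ±2K
  rcases eq_or_ne X₂ (2*K) with hv | hne3
  · subst hv
    have c1 : 2 ≤ X₁ ∨ 2 ≤ W₂ := by omega
    have c2 : X₁ ≤ -2 ∨ W₂ ≤ -2 := by omega
    right
    have hprod : W₂ * X₁ ≤ -4 := by
      rcases c1 with c1 | c1 <;> rcases c2 with c2 | c2 <;> nlinarith
    nlinarith
  · have hv : X₂ = -(2*K) := by omega
    subst hv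
    have c1 : 2 ≤ X₁ ∨ W₂ ≤ -2 := by omega
    have c2 : X₁ ≤ -2 ∨ 2 ≤ W₂ := by omega
    left
    have hprod : 4 ≤ W₂ * X₁ := by
      rcases c1 with c1 | c1 <;> rcases c2 with c2 | c2 <;> nlinarith
    nlinarith

lemma det_lb (k : ℕ) (hk : 2 ≤ k) (u₁ u₂ v₁ v₂ : ℤ)
    (hu : u₁.natAbs + u₂.natAbs = 2 * k) (hv : v₁.natAbs + v₂.natAbs = 2 * k)
    (hs : 2 * k + 1 ≤ (u₁ + v₁).natAbs + (u₂ + v₂).natAbs)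
    (hd : 2 * k + 1 ≤ (u₁ - v₁).natAbs + (u₂ - v₂).natAbs) :
    2 * k ^ 2 + 2 ≤ (u₁ * v₂ - u₂ * v₁).natAbs := by
  set K : ℤ := (k : ℤ) with hKdef
  have hK : 2 ≤ K := by omega
  set W₁ : ℤ := u₁ + u₂ with hW₁
  set W₂ : ℤ := u₁ - u₂ with hW₂
  set X₁ : ℤ := v₁ + v₂ with hX₁
  set X₂ : ℤ := v₁ - v₂ with hX₂
  -- basic linear facts
  have hWb1 : -(2*K) ≤ W₁ ∧ W₁ ≤ 2*K := by omega
  have hWb2 : -(2*K) ≤ W₂ ∧ W₂ ≤ 2*K := by omega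
  have hXb1 : -(2*K) ≤ X₁ ∧ X₁ ≤ 2*K := by omega
  have hXb2 : -(2*K) ≤ X₂ ∧ X₂ ≤ 2*K := by omega
  have hWm : W₁ = 2*K ∨ W₁ = -(2*K) ∨ W₂ = 2*K ∨ W₂ = -(2*K) := by omega
  -- parity upgrade: the sums are even, so ≥ 2k+2
  have hS : (2*K+2 ≤ W₁+X₁ ∨ W₁+X₁ ≤ -(2*K+2)) ∨ (2*K+2 ≤ W₂+X₂ ∨ W₂+X₂ ≤ -(2*K+2)) := by
    omega
  have hD : (2*K+2 ≤ W₁-X₁ ∨ W₁-X₁ ≤ -(2*K+2)) ∨ (2*K+2 ≤ W₂-X₂ ∨ W₂-X₂ ≤ -(2*K+2)) := by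
    omega
  have hXm : X₁ = 2*K ∨ X₁ = -(2*K) ∨ X₂ = 2*K ∨ X₂ = -(2*K) := by omega
  have key : 4*K^2+4 ≤ 2*(u₁*v₂ - u₂*v₁) ∨ 2*(u₁*v₂ - u₂*v₁) ≤ -(4*K^2+4) := by
    rcases hWm with hw | hw | hw | hw
    · have h := det_aux K W₂ X₁ X₂ hK hWb2 hXb1 hXb2 hXm (by omega) (by omega)
      have : W₂*X₁ - 2*K*X₂ = 2*(u₁*v₂ - u₂*v₁) := by
        rw [hW₂, hX₁, hX₂]
        have : (2:ℤ)*K = W₁ := hw.symm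
        rw [this, hW₁]; ring
      rw [this] at h; exact h
    · have h := det_aux K (-W₂) X₁ X₂ hK (by omega) hXb1 hXb2 hXm (by omega) (by omega)
      have : (-W₂)*X₁ - 2*K*X₂ = -(2*(u₁*v₂ - u₂*v₁)) := by
        rw [hW₂, hX₁, hX₂]
        have h2 : (2:ℤ)*K = -W₁ := by omega
        rw [h2, hW₁]; ring
      rw [this] at h; omega
    · have h := det_aux K W₁ X₂ X₁ hK hWb1 hXb2 hXb1 (by omega) (by omega) (by omega)
      have : W₁*X₂ - 2*K*X₁ = -(2*(u₁*v₂ - u₂*v₁)) := by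
        rw [hW₁, hX₁, hX₂]
        have h2 : (2:ℤ)*K = W₂ := hw.symm
        rw [h2, hW₂]; ring
      rw [this] at h; omega
    · have h := det_aux K (-W₁) X₂ X₁ hK (by omega) hXb2 hXb1 (by omega) (by omega) (by omega)
      have : (-W₁)*X₂ - 2*K*X₁ = 2*(u₁*v₂ - u₂*v₁) := by
        rw [hW₁, hX₁, hX₂]
        have h2 : (2:ℤ)*K = -W₂ := by omega
        rw [h2, hW₂]; ring
      rw [this] at h; exact h
  have h4 : (4:ℤ)*K^2+4 = 2*(((2*k^2+2 : ℕ) : ℤ)) := by rw [hKdef]; push_cast; ring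
  rw [h4] at key
  generalize hE : u₁*v₂ - u₂*v₁ = E at key ⊢
  generalize hQ : 2*k^2+2 = Q at key ⊢
  omega

lemma trans_count (k : ℕ) (u₁ u₂ : ℤ) (hu : u₁.natAbs + u₂.natAbs = 2 * k) :
    ((Dm k).filter (fun p => (p.1 + u₁, p.2 + u₂) ∈ Dm k)).card ≤ k + 1 := by
  classical
  rcases le_or_gt 0 u₁ with hs | hs
  · -- u₁ ≥ 0 : p₁ ∈ [-(min u₁ k), -(max 0 (u₁ - k))]
    refine le_trans (Finset.card_le_card_of_injOn
      (t := Finset.Icc (-(min u₁ (k:ℤ))) (-(max 0 (u₁ - (k:ℤ))))) (fun p : ℤ × ℤ => p.1)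
      (fun p hp => ?_) (fun p hp q hq hpq => ?_)) ?_
    · simp only [Finset.mem_coe, Finset.mem_filter, mem_Dm] at hp
      obtain ⟨hp1, hp2⟩ := hp
      simp only [Finset.mem_coe, Finset.mem_Icc]
      omega
    · simp only [Finset.coe_filter, Set.mem_setOf_eq, mem_Dm] at hp hq
      obtain ⟨hp1, hp2⟩ := hp
      obtain ⟨hq1, hq2⟩ := hq
      simp only at hpq
      have h2 : p.2 = q.2 := by omega
      exact Prod.ext hpq h2
    · rw [Int.card_Icc]; omega
  · -- u₁ < 0 : p₁ ∈ [max 0 (-u₁ - k), min (-u₁) k]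
    refine le_trans (Finset.card_le_card_of_injOn
      (t := Finset.Icc (max 0 (-u₁ - (k:ℤ))) (min (-u₁) (k:ℤ))) (fun p : ℤ × ℤ => p.1)
      (fun p hp => ?_) (fun p hp q hq hpq => ?_)) ?_
    · simp only [Finset.mem_coe, Finset.mem_filter, mem_Dm] at hp
      obtain ⟨hp1, hp2⟩ := hp
      simp only [Finset.mem_coe, Finset.mem_Icc]
      omega
    · simp only [Finset.coe_filter, Set.mem_setOf_eq, mem_Dm] at hp hq
      obtain ⟨hp1, hp2⟩ := hp
      obtain ⟨hq1, hq2⟩ := hq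
      simp only at hpq
      have h2 : p.2 = q.2 := by omega
      exact Prod.ext hpq h2
    · rw [Int.card_Icc]; omega


set_option maxHeartbeats 1000000 in
/-- **Optimality for `(r_α, r_ω, z_ω) = (1, 2, 0)`:**
if a finite abelian group `G` has elements `a, b` and a nonzero involution `t` such
that every element of `G` is a sum `α • a + β • b + γ • t` with `α, β ∈ ℤ`, `γ ∈ ℕ`
and `|α| + |β| + γ ≤ k` (i.e. the mixed Cayley graph with undirected generators
`±a, ±b` and involution `t` has diameter at most `k`), then `|G| ≤ 4k²`.
In particular, the Moore bound `M_AC(1,2,0,k) = 4k² + 2` is not attainable. -/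
theorem stmt_8 {G : Type*} [AddCommGroup G] [Fintype G] (k : ℕ) (hk : 2 ≤ k)
    (a b t : G) (ht0 : t ≠ 0) (ht : 2 • t = 0)
    (hdiam : ∀ g : G, ∃ (α β : ℤ) (γ : ℕ),
      g = α • a + β • b + γ • t ∧ α.natAbs + β.natAbs + γ ≤ k) :
    Fintype.card G ≤ 4 * k ^ 2 := by
  classical
  by_contra hcon
  push_neg at hcon
  -- basic facts about t
  have ht2 : t + t = 0 := by rwa [two_nsmul] at ht
  have htz : ((2:ℤ)) • t = 0 := by rw [two_zsmul]; exact ht2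
  have hzt : ∀ ε : ℤ, ε • t = 0 ∨ ε • t = t := by
    intro ε
    have h1 : ε • t = (ε % 2) • t := by
      conv_lhs => rw [show ε = 2 * (ε / 2) + ε % 2 by omega]
      have h0 : (2 * (ε / 2)) • t = 0 := by
        first
        | rw [mul_zsmul, htz, smul_zero]
        | rw [mul_comm, mul_zsmul, htz, smul_zero]
        | rw [mul_zsmul]; rw [smul_comm]; rw [htz, smul_zero]
      rw [add_zsmul, h0, zero_add]
    rcases (by omega : ε % 2 = 0 ∨ ε % 2 = 1) with h | h
    · left; rw [h1, h, zero_zsmul]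
    · right; rw [h1, h, one_zsmul]
  -- index set and covering map
  set F : (ℤ × ℤ) × ℤ → G := fun q => q.1.1 • a + q.1.2 • b + q.2 • t with hF
  set S : Finset ((ℤ × ℤ) × ℤ) :=
    ((Dm k) ×ˢ ({0} : Finset ℤ)) ∪ ((Dm (k-1)) ×ˢ ({1} : Finset ℤ)) with hS
  have hmemS : ∀ q : (ℤ × ℤ) × ℤ,
      q ∈ S ↔ (q.1.1.natAbs + q.1.2.natAbs ≤ k ∧ q.2 = 0) ∨
               (q.1.1.natAbs + q.1.2.natAbs ≤ k - 1 ∧ q.2 = 1) := by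
    intro q
    simp only [hS, Finset.mem_union, Finset.mem_product, Finset.mem_singleton, mem_Dm]
  have hsurj : ∀ g : G, ∃ q ∈ S, F q = g := by
    intro g
    obtain ⟨α, β, γ, hg, hb⟩ := hdiam g
    have hγ : (γ : ℕ) • t = ((γ % 2 : ℕ) : ℤ) • t := by
      conv_lhs => rw [show γ = 2 * (γ / 2) + γ % 2 by omega]
      have h0 : (2 * (γ / 2)) • t = 0 := by
        first
        | rw [mul_nsmul, ht, smul_zero]
        | rw [mul_comm, mul_nsmul, ht, smul_zero]
        | rw [mul_nsmul]; rw [smul_comm]; rw [ht, smul_zero]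
      rw [add_nsmul, h0, zero_add, natCast_zsmul]
    rcases (by omega : γ % 2 = 0 ∨ γ % 2 = 1) with h | h
    · refine ⟨((α, β), 0), ?_, ?_⟩
      · rw [hmemS]; left; exact ⟨show α.natAbs + β.natAbs ≤ k by omega, rfl⟩
      · rw [hF]; simp only
        rw [hg, hγ, h]
        norm_num
    · refine ⟨((α, β), 1), ?_, ?_⟩
      · rw [hmemS]; right; exact ⟨show α.natAbs + β.natAbs ≤ k - 1 by omega, rfl⟩
      · rw [hF]; simp only
        rw [hg, hγ, h]
        norm_num
  -- cardinalities
  have hcardS : S.card = 4 * k ^ 2 + 2 := by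
    rw [hS, Finset.card_union_of_disjoint, Finset.card_product, Finset.card_product,
      card_Dm, card_Dm]
    · simp only [Finset.card_singleton, mul_one]
      have h1 : 1 ≤ k := by omega
      zify [h1]
      ring
    · rw [Finset.disjoint_left]
      rintro q hq1 hq2
      simp only [Finset.mem_product, Finset.mem_singleton] at hq1 hq2
      rw [hq1.2] at hq2
      exact absurd hq2.2 (by norm_num)
  have hord : addOrderOf t = 2 := by
    haveI : Fact (Nat.Prime 2) := ⟨Nat.prime_two⟩
    exact addOrderOf_eq_prime ht ht0
  have hdvd : 2 ∣ Fintype.card G := hord ▸ addOrderOf_dvd_card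
  have hcardle : Fintype.card G ≤ S.card := by
    rw [← Finset.card_univ]
    refine le_trans (Finset.card_le_card ?_) (Finset.card_image_le (f := F))
    intro g _
    obtain ⟨q, hq, hfq⟩ := hsurj g
    exact Finset.mem_image.mpr ⟨q, hq, hfq⟩
  have hcardG : Fintype.card G = 4 * k ^ 2 + 2 := by omega
  -- injectivity
  have hinj : Set.InjOn F ↑S := by
    apply Finset.injOn_of_card_image_eq
    have h1 : (S.image F).card ≤ S.card := Finset.card_image_le
    have h2 : Fintype.card G ≤ (S.image F).card := by
      rw [← Finset.card_univ]
      apply Finset.card_le_card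
      intro g _
      obtain ⟨q, hq, hfq⟩ := hsurj g
      exact Finset.mem_image.mpr ⟨q, hq, hfq⟩
    omega
  -- relation lemmas
  have hzero : ∀ z₁ z₂ : ℤ, z₁ • a + z₂ • b = 0 → ¬(z₁ = 0 ∧ z₂ = 0) →
      2 * k + 1 ≤ z₁.natAbs + z₂.natAbs := by
    intro z₁ z₂ hrel hnz
    by_contra hlt
    push_neg at hlt
    obtain ⟨x, y, h1, h2⟩ := split_lemma k k z₁ z₂ (by omega)
    have he : F ((x, y), 0) = F ((x + z₁, y + z₂), 0) := by
      rw [hF]; simp only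
      have : (x + z₁) • a + (y + z₂) • b = (x • a + y • b) + (z₁ • a + z₂ • b) := by
        rw [add_zsmul, add_zsmul]; abel
      rw [this, hrel, add_zero]
    have hm1 : ((x, y), (0:ℤ)) ∈ S := by
      rw [hmemS]; left; exact ⟨show x.natAbs + y.natAbs ≤ k by omega, rfl⟩
    have hm2 : ((x + z₁, y + z₂), (0:ℤ)) ∈ S := by
      rw [hmemS]; left; exact ⟨show (x+z₁).natAbs + (y+z₂).natAbs ≤ k by omega, rfl⟩
    have := hinj hm1 hm2 he
    simp only [Prod.mk.injEq] at this
    exact hnz ⟨by omega, by omega⟩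
  have htt : ∀ c d : ℤ, c • a + d • b = t → 2 * k ≤ c.natAbs + d.natAbs := by
    intro c d hrel
    by_contra hlt
    push_neg at hlt
    obtain ⟨x, y, h1, h2⟩ := split_lemma (k-1) k c d (by omega)
    have he : F ((x, y), 1) = F ((x + c, y + d), 0) := by
      rw [hF]; simp only
      have : (x + c) • a + (y + d) • b = (x • a + y • b) + (c • a + d • b) := by
        rw [add_zsmul, add_zsmul]; abel
      rw [this, hrel]
      norm_num
    have hm1 : ((x, y), (1:ℤ)) ∈ S := by
      rw [hmemS]; right; exact ⟨show x.natAbs + y.natAbs ≤ k - 1 by omega, rfl⟩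
    have hm2 : ((x + c, y + d), (0:ℤ)) ∈ S := by
      rw [hmemS]; left; exact ⟨show (x+c).natAbs + (y+d).natAbs ≤ k by omega, rfl⟩
    have := hinj hm1 hm2 he
    simp only [Prod.mk.injEq] at this
    exact absurd this.2 (by norm_num)
  have hlam : ∀ z₁ z₂ : ℤ, (∃ ε : ℤ, z₁ • a + z₂ • b = ε • t) → ¬(z₁ = 0 ∧ z₂ = 0) →
      2 * k ≤ z₁.natAbs + z₂.natAbs ∧
      (z₁.natAbs + z₂.natAbs ≤ 2 * k → z₁ • a + z₂ • b = t ∧ z₁.natAbs + z₂.natAbs = 2 * k) := by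
    intro z₁ z₂ ⟨ε, hε⟩ hnz
    rcases hzt ε with h | h
    · rw [h] at hε
      have := hzero z₁ z₂ hε hnz
      exact ⟨by omega, fun hc => absurd hc (by omega)⟩
    · rw [h] at hε
      have := htt z₁ z₂ hε
      exact ⟨this, fun hc => ⟨hε, by omega⟩⟩
  -- quotient by ⟨t⟩
  set H : AddSubgroup G := AddSubgroup.zmultiples t with hH
  haveI : Fintype (G ⧸ H) := Fintype.ofFinite _
  have hqcard : (Finset.univ : Finset (G ⧸ H)).card = 2 * k ^ 2 + 1 := by
    have hl := AddSubgroup.card_eq_card_quotient_mul_card_addSubgroup H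
    have h2 : Nat.card H = 2 := by rw [hH, Nat.card_zmultiples]; exact hord
    rw [h2, Nat.card_eq_fintype_card (α := G), hcardG,
      Nat.card_eq_fintype_card (α := G ⧸ H)] at hl
    rw [Finset.card_univ]
    omega
  set φ : ℤ × ℤ → G ⧸ H := fun p => QuotientAddGroup.mk (p.1 • a + p.2 • b) with hφ
  have hφdiff : ∀ p q : ℤ × ℤ, φ p = φ q →
      ∃ ε : ℤ, (q.1 - p.1) • a + (q.2 - p.2) • b = ε • t := by
    intro p q h
    rw [hφ] at h
    simp only at h
    rw [QuotientAddGroup.eq, hH] at h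
    obtain ⟨ε, hε⟩ := AddSubgroup.mem_zmultiples_iff.mp h
    refine ⟨ε, ?_⟩
    have hrw : (q.1 - p.1) • a + (q.2 - p.2) • b
        = -(p.1 • a + p.2 • b) + (q.1 • a + q.2 • b) := by
      rw [sub_zsmul, sub_zsmul]; abel
    rw [hrw, ← hε]
  -- first pigeonhole: a vector u with ‖u‖₁ = 2k and u·(a,b) = t
  obtain ⟨p, hp, q, hq, hne, heq⟩ := Finset.exists_ne_map_eq_of_card_lt_of_maps_to
    (s := Dm k) (t := (Finset.univ : Finset (G ⧸ H)))
    (by rw [card_Dm, hqcard]; omega) (fun p _ => Finset.mem_univ (φ p))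
  obtain ⟨εu, hεu⟩ := hφdiff p q heq
  set u₁ : ℤ := q.1 - p.1 with hu₁
  set u₂ : ℤ := q.2 - p.2 with hu₂
  clear_value u₁ u₂
  have hu0 : ¬(u₁ = 0 ∧ u₂ = 0) := by
    rintro ⟨h1, h2⟩
    exact hne (Prod.ext (by omega) (by omega)).symm
  have hub : u₁.natAbs + u₂.natAbs ≤ 2 * k := by
    have h1 := mem_Dm.mp hp
    have h2 := mem_Dm.mp hq
    omega
  obtain ⟨hu2k, hurest⟩ := hlam u₁ u₂ ⟨εu, hεu⟩ hu0
  obtain ⟨hut, hunorm⟩ := hurest hub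
  -- second pigeonhole: independent v with ‖v‖₁ = 2k, v·(a,b) = t
  set E₂ : Finset (ℤ × ℤ) := (Dm k).filter (fun r => ¬((r.1 + u₁, r.2 + u₂) ∈ Dm k)) with hE₂
  have hE₂card : (Finset.univ : Finset (G ⧸ H)).card < E₂.card := by
    have hfc := Finset.card_filter_add_card_filter_not
      (s := Dm k) (p := fun r : ℤ × ℤ => (r.1 + u₁, r.2 + u₂) ∈ Dm k)
    have htc := trans_count k u₁ u₂ hunorm
    rw [card_Dm] at hfc
    rw [hqcard, hE₂]
    omega
  obtain ⟨p', hp', q', hq', hne', heq'⟩ := Finset.exists_ne_map_eq_of_card_lt_of_maps_to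
    (s := E₂) (t := (Finset.univ : Finset (G ⧸ H)))
    hE₂card (fun r _ => Finset.mem_univ (φ r))
  obtain ⟨εv, hεv⟩ := hφdiff p' q' heq'
  set v₁ : ℤ := q'.1 - p'.1 with hv₁
  set v₂ : ℤ := q'.2 - p'.2 with hv₂
  clear_value v₁ v₂
  have hpD' := Finset.mem_filter.mp hp'
  have hqD' := Finset.mem_filter.mp hq'
  have hv0 : ¬(v₁ = 0 ∧ v₂ = 0) := by
    rintro ⟨h1, h2⟩
    exact hne' (Prod.ext (by omega) (by omega)).symm
  have hvb : v₁.natAbs + v₂.natAbs ≤ 2 * k := by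
    have h1 := mem_Dm.mp hpD'.1
    have h2 := mem_Dm.mp hqD'.1
    omega
  obtain ⟨hv2k, hvrest⟩ := hlam v₁ v₂ ⟨εv, hεv⟩ hv0
  obtain ⟨hvt, hvnorm⟩ := hvrest hvb
  have hvnu : ¬(v₁ = u₁ ∧ v₂ = u₂) := by
    rintro ⟨e1, e2⟩
    apply hpD'.2
    have heqq : (p'.1 + u₁, p'.2 + u₂) = q' := Prod.ext (by omega) (by omega)
    rw [heqq]
    exact hqD'.1
  have hvnmu : ¬(v₁ = -u₁ ∧ v₂ = -u₂) := by
    rintro ⟨e1, e2⟩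
    apply hqD'.2
    have heqq : (q'.1 + u₁, q'.2 + u₂) = p' := Prod.ext (by omega) (by omega)
    rw [heqq]
    exact hpD'.1
  -- determinant bounds
  have hsum0 : (u₁ + v₁) • a + (u₂ + v₂) • b = 0 := by
    have hrw : (u₁ + v₁) • a + (u₂ + v₂) • b
        = (u₁ • a + u₂ • b) + (v₁ • a + v₂ • b) := by
      rw [add_zsmul, add_zsmul]; abel
    rw [hrw, hut, hvt, ht2]
  have hdiff0 : (u₁ - v₁) • a + (u₂ - v₂) • b = 0 := by
    have hrw : (u₁ - v₁) • a + (u₂ - v₂) • b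
        = (u₁ • a + u₂ • b) - (v₁ • a + v₂ • b) := by
      rw [sub_zsmul, sub_zsmul]; abel
    rw [hrw, hut, hvt, sub_self]
  have hsne : ¬(u₁ + v₁ = 0 ∧ u₂ + v₂ = 0) := by
    rintro ⟨e1, e2⟩; exact hvnmu ⟨by omega, by omega⟩
  have hdne : ¬(u₁ - v₁ = 0 ∧ u₂ - v₂ = 0) := by
    rintro ⟨e1, e2⟩; exact hvnu ⟨by omega, by omega⟩
  have hdet := det_lb k hk u₁ u₂ v₁ v₂ hunorm hvnorm
    (hzero _ _ hsum0 hsne) (hzero _ _ hdiff0 hdne)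
  set D : ℤ := u₁ * v₂ - u₂ * v₁ with hD
  clear_value D
  have hDne : D ≠ 0 := by
    intro h
    rw [h] at hdet
    simp only [Int.natAbs_zero] at hdet
    omega
  have hDub : D.natAbs ≤ 4 * k ^ 2 := by
    have h1 : D.natAbs ≤ (u₁ * v₂).natAbs + (u₂ * v₁).natAbs := by
      rw [hD]; exact Int.natAbs_sub_le _ _
    rw [Int.natAbs_mul, Int.natAbs_mul] at h1
    have hh : (u₁.natAbs + u₂.natAbs) * (v₁.natAbs + v₂.natAbs) = 4 * k ^ 2 := by
      rw [hunorm, hvnorm]; ring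
    have hexp : (u₁.natAbs + u₂.natAbs) * (v₁.natAbs + v₂.natAbs)
        = u₁.natAbs * v₁.natAbs + u₁.natAbs * v₂.natAbs
          + u₂.natAbs * v₁.natAbs + u₂.natAbs * v₂.natAbs := by ring
    omega
  -- the box of |D| points, pairwise inequivalent mod ℤu + ℤv
  set d₁ : ℕ := Int.gcd u₁ v₁ with hd₁
  have hd₁pos : 0 < d₁ := by
    rcases Nat.eq_zero_or_pos d₁ with h | h
    · exfalso
      obtain ⟨e1, e2⟩ := Int.gcd_eq_zero_iff.mp h
      exact hDne (by rw [hD, e1, e2]; ring)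
    · exact h
  have hdvd1 : (d₁:ℤ) ∣ D := by
    rw [hD]
    exact dvd_sub (Dvd.dvd.mul_right (Int.gcd_dvd_left _ _) v₂)
      (Dvd.dvd.mul_left (Int.gcd_dvd_right _ _) u₂)
  have hdvdn : d₁ ∣ D.natAbs := by
    have h := Int.natAbs_dvd_natAbs.mpr hdvd1
    simpa using h
  set e : ℕ := D.natAbs / d₁ with he
  have hde : d₁ * e = D.natAbs := Nat.mul_div_cancel' hdvdn
  have hDpos : 0 < D.natAbs := Int.natAbs_pos.mpr hDne
  have hepos : 0 < e := by
    rcases Nat.eq_zero_or_pos e with h | h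
    · rw [h, mul_zero] at hde; omega
    · exact h
  set B : Finset (ℤ × ℤ) :=
    (Finset.Icc (0:ℤ) ((d₁:ℤ) - 1)) ×ˢ (Finset.Icc (0:ℤ) ((e:ℤ) - 1)) with hB
  have hBcard : B.card = D.natAbs := by
    rw [hB, Finset.card_product, Int.card_Icc, Int.card_Icc,
      show (((d₁:ℤ) - 1) + 1 - 0).toNat = d₁ by omega,
      show (((e:ℤ) - 1) + 1 - 0).toNat = e by omega]
    exact hde
  obtain ⟨pz, hpz, qz, hqz, hnez, heqz⟩ := Finset.exists_ne_map_eq_of_card_lt_of_maps_to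
    (s := B) (t := (Finset.univ : Finset (G ⧸ H)))
    (by rw [hqcard, hBcard]; omega) (fun r _ => Finset.mem_univ (φ r))
  obtain ⟨εz, hεz⟩ := hφdiff pz qz heqz
  set z₁ : ℤ := qz.1 - pz.1 with hz₁
  set z₂ : ℤ := qz.2 - pz.2 with hz₂
  clear_value z₁ z₂
  have hpzm := Finset.mem_product.mp (by rw [hB] at hpz; exact hpz)
  have hqzm := Finset.mem_product.mp (by rw [hB] at hqz; exact hqz)
  simp only [Finset.mem_Icc] at hpzm hqzm
  have hz0 : ¬(z₁ = 0 ∧ z₂ = 0) := by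
    rintro ⟨h1, h2⟩
    exact hnez (Prod.ext (by omega) (by omega)).symm
  have hzb1 : z₁.natAbs < d₁ := by
    have h1 := hpzm.1; have h2 := hpzm.2; have h3 := hqzm.1; have h4 := hqzm.2
    omega
  have hzb2 : z₂.natAbs < e := by
    have h1 := hpzm.1; have h2 := hpzm.2; have h3 := hqzm.1; have h4 := hqzm.2
    omega
  -- z is not in the lattice generated by u and v
  have not_in_L0 : ∀ m n : ℤ, ¬(z₁ = m * u₁ + n * v₁ ∧ z₂ = m * u₂ + n * v₂) := by
    rintro m n ⟨h1, h2⟩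
    have hz₁0 : z₁ = 0 := by
      apply Int.eq_zero_of_dvd_of_natAbs_lt_natAbs (d := (d₁:ℤ))
      · rw [h1]
        exact dvd_add (Dvd.dvd.mul_left (Int.gcd_dvd_left _ _) m)
          (Dvd.dvd.mul_left (Int.gcd_dvd_right _ _) n)
      · simpa using hzb1
    have h0 : m * u₁ + n * v₁ = 0 := by rw [← h1, hz₁0]
    have hbez := Int.gcd_eq_gcd_ab u₁ v₁
    set A : ℤ := Int.gcdA u₁ v₁ with hA
    set Bz : ℤ := Int.gcdB u₁ v₁ with hBz
    have hc : z₂ * (d₁:ℤ) = (A * n - Bz * m) * D := by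
      rw [hd₁, hbez, h2, hD]
      linear_combination (A * u₂ + Bz * v₂) * h0
    have hcnat : z₂.natAbs * d₁ = (A * n - Bz * m).natAbs * D.natAbs := by
      have h := congrArg Int.natAbs hc
      rwa [Int.natAbs_mul, Int.natAbs_mul, Int.natAbs_natCast] at h
    rcases Nat.eq_zero_or_pos (A * n - Bz * m).natAbs with h | h
    · rw [h, zero_mul] at hcnat
      rcases Nat.mul_eq_zero.mp hcnat with h' | h'
      · exact hz0 ⟨hz₁0, by omega⟩
      · omega
    · have h1' : D.natAbs ≤ z₂.natAbs * d₁ := by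
        calc D.natAbs = 1 * D.natAbs := (one_mul _).symm
          _ ≤ (A * n - Bz * m).natAbs * D.natAbs := Nat.mul_le_mul_right _ h
          _ = z₂.natAbs * d₁ := hcnat.symm
      rw [← hde, Nat.mul_comm z₂.natAbs d₁] at h1'
      have := Nat.le_of_mul_le_mul_left h1' hd₁pos
      omega
  -- rounding: reduce z modulo ℤu + ℤv
  obtain ⟨m, hm⟩ := round_div (z₁ * v₂ - z₂ * v₁) D hDne
  obtain ⟨n, hn⟩ := round_div (u₁ * z₂ - u₂ * z₁) D hDne
  set w₁ : ℤ := z₁ - m * u₁ - n * v₁ with hw₁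
  set w₂ : ℤ := z₂ - m * u₂ - n * v₂ with hw₂
  set P₁ : ℤ := z₁ * v₂ - z₂ * v₁ - m * D with hP₁
  set P₂ : ℤ := u₁ * z₂ - u₂ * z₁ - n * D with hP₂
  clear_value w₁ w₂ P₁ P₂
  have hcr1 : D * w₁ = P₁ * u₁ + P₂ * v₁ := by rw [hw₁, hP₁, hP₂, hD]; ring
  have hcr2 : D * w₂ = P₁ * u₂ + P₂ * v₂ := by rw [hw₂, hP₁, hP₂, hD]; ring
  have hA1 : D.natAbs * w₁.natAbs ≤ P₁.natAbs * u₁.natAbs + P₂.natAbs * v₁.natAbs := by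
    calc D.natAbs * w₁.natAbs = (D * w₁).natAbs := (Int.natAbs_mul _ _).symm
      _ = (P₁ * u₁ + P₂ * v₁).natAbs := by rw [hcr1]
      _ ≤ (P₁ * u₁).natAbs + (P₂ * v₁).natAbs := Int.natAbs_add_le _ _
      _ = P₁.natAbs * u₁.natAbs + P₂.natAbs * v₁.natAbs := by
          rw [Int.natAbs_mul, Int.natAbs_mul]
  have hA2 : D.natAbs * w₂.natAbs ≤ P₁.natAbs * u₂.natAbs + P₂.natAbs * v₂.natAbs := by
    calc D.natAbs * w₂.natAbs = (D * w₂).natAbs := (Int.natAbs_mul _ _).symm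
      _ = (P₁ * u₂ + P₂ * v₂).natAbs := by rw [hcr2]
      _ ≤ (P₁ * u₂).natAbs + (P₂ * v₂).natAbs := Int.natAbs_add_le _ _
      _ = P₁.natAbs * u₂.natAbs + P₂.natAbs * v₂.natAbs := by
          rw [Int.natAbs_mul, Int.natAbs_mul]
  have hPsum : P₁.natAbs + P₂.natAbs ≤ D.natAbs := by omega
  have hwnorm : w₁.natAbs + w₂.natAbs ≤ 2 * k := by
    have e0 : D.natAbs * (w₁.natAbs + w₂.natAbs)
        = D.natAbs * w₁.natAbs + D.natAbs * w₂.natAbs := Nat.mul_add _ _ _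
    have e1 : P₁.natAbs * u₁.natAbs + P₁.natAbs * u₂.natAbs = P₁.natAbs * (2 * k) := by
      rw [← Nat.mul_add, hunorm]
    have e2 : P₂.natAbs * v₁.natAbs + P₂.natAbs * v₂.natAbs = P₂.natAbs * (2 * k) := by
      rw [← Nat.mul_add, hvnorm]
    have e3 : D.natAbs * (w₁.natAbs + w₂.natAbs) ≤ (P₁.natAbs + P₂.natAbs) * (2 * k) := by
      have e4 : (P₁.natAbs + P₂.natAbs) * (2 * k)
          = P₁.natAbs * (2 * k) + P₂.natAbs * (2 * k) := Nat.add_mul _ _ _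
      omega
    have e5 : (P₁.natAbs + P₂.natAbs) * (2 * k) ≤ D.natAbs * (2 * k) :=
      Nat.mul_le_mul_right _ hPsum
    exact Nat.le_of_mul_le_mul_left (by omega) hDpos
  have hw0 : ¬(w₁ = 0 ∧ w₂ = 0) := by
    rintro ⟨e1, e2⟩
    rw [hw₁] at e1
    rw [hw₂] at e2
    exact not_in_L0 m n ⟨by linarith, by linarith⟩
  have hwrel : ∃ ε' : ℤ, w₁ • a + w₂ • b = ε' • t := by
    refine ⟨εz - m - n, ?_⟩
    have expand : w₁ • a + w₂ • b
        = (z₁ • a + z₂ • b) - m • (u₁ • a + u₂ • b) - n • (v₁ • a + v₂ • b) := by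
      rw [hw₁, hw₂]
      simp only [sub_zsmul, mul_zsmul, smul_add]
      abel
    rw [expand, hεz, hut, hvt, sub_zsmul, sub_zsmul]
    abel
  obtain ⟨hw2k, hwrest⟩ := hlam w₁ w₂ hwrel hw0
  obtain ⟨hwt, hwnorm2k⟩ := hwrest hwnorm
  have hP₂w : u₁ * w₂ - u₂ * w₁ = P₂ := by rw [hw₁, hw₂, hP₂, hD]; ring
  rcases eq_or_ne P₂ 0 with hP20 | hP2ne
  · -- w parallel to u : forces |P₁| = |D|, contradicting 2|P₁| ≤ |D|
    have hc1 : D.natAbs * w₁.natAbs = P₁.natAbs * u₁.natAbs := by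
      have hh : D * w₁ = P₁ * u₁ := by rw [hcr1, hP20, zero_mul, add_zero]
      calc D.natAbs * w₁.natAbs = (D * w₁).natAbs := (Int.natAbs_mul _ _).symm
        _ = (P₁ * u₁).natAbs := by rw [hh]
        _ = P₁.natAbs * u₁.natAbs := Int.natAbs_mul _ _
    have hc2 : D.natAbs * w₂.natAbs = P₁.natAbs * u₂.natAbs := by
      have hh : D * w₂ = P₁ * u₂ := by rw [hcr2, hP20, zero_mul, add_zero]
      calc D.natAbs * w₂.natAbs = (D * w₂).natAbs := (Int.natAbs_mul _ _).symm
        _ = (P₁ * u₂).natAbs := by rw [hh]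
        _ = P₁.natAbs * u₂.natAbs := Int.natAbs_mul _ _
    have e0 : D.natAbs * (w₁.natAbs + w₂.natAbs)
        = D.natAbs * w₁.natAbs + D.natAbs * w₂.natAbs := Nat.mul_add _ _ _
    have e1 : P₁.natAbs * u₁.natAbs + P₁.natAbs * u₂.natAbs = P₁.natAbs * (2 * k) := by
      rw [← Nat.mul_add, hunorm]
    have e2 : D.natAbs * (w₁.natAbs + w₂.natAbs) = D.natAbs * (2 * k) := by
      rw [hwnorm2k]
    have e3 : D.natAbs * (2 * k) = P₁.natAbs * (2 * k) := by omega
    have e4 : D.natAbs = P₁.natAbs := Nat.eq_of_mul_eq_mul_right (by omega) e3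
    omega
  · -- independent pair (u, w) : second determinant bound gives the contradiction
    have hsw0 : (u₁ + w₁) • a + (u₂ + w₂) • b = 0 := by
      have hrw : (u₁ + w₁) • a + (u₂ + w₂) • b
          = (u₁ • a + u₂ • b) + (w₁ • a + w₂ • b) := by
        rw [add_zsmul, add_zsmul]; abel
      rw [hrw, hut, hwt, ht2]
    have hdw0 : (u₁ - w₁) • a + (u₂ - w₂) • b = 0 := by
      have hrw : (u₁ - w₁) • a + (u₂ - w₂) • b
          = (u₁ • a + u₂ • b) - (w₁ • a + w₂ • b) := by
        rw [sub_zsmul, sub_zsmul]; abel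
      rw [hrw, hut, hwt, sub_self]
    have hswne : ¬(u₁ + w₁ = 0 ∧ u₂ + w₂ = 0) := by
      rintro ⟨e1, e2⟩
      apply hP2ne
      rw [← hP₂w, show w₂ = -u₂ by omega, show w₁ = -u₁ by omega]
      ring
    have hdwne : ¬(u₁ - w₁ = 0 ∧ u₂ - w₂ = 0) := by
      rintro ⟨e1, e2⟩
      apply hP2ne
      rw [← hP₂w, show w₂ = u₂ by omega, show w₁ = u₁ by omega]
      ring
    have hdet2 := det_lb k hk u₁ u₂ w₁ w₂ hunorm hwnorm2k
      (hzero _ _ hsw0 hswne) (hzero _ _ hdw0 hdwne)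
    rw [hP₂w] at hdet2
    omega
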